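/- Let R be a commutative local noetherian ring with maximal ideal 𝔪 and 𝔪-adic completion R̂. Let M and N be finitely generated R-modules and let h : M ⊗_R R̂ → N ⊗_R R̂ be an R̂-linear map. Then there exists an R-linear map f : M → N such that the image of h − (f ⊗ 1) is contained in (N ⊗_R R̂)·𝔪̂, where 𝔪̂ is the maximal ideal of R̂. -/

import Mathlib

universe u

open scoped TensorProduct
open Function LinearMap

noncomputable section

namespace Stmt11Aux


variable {R : Type*} [CommRing R] (A : Type*) [CommRing A] [Algebra R A]
variable {M N P : Type*} [AddCommGroup M] [Module R M] [AddCommGroup N] [Module R N]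
  [AddCommGroup P] [Module R P]

lemma psi_tmul (a : A) (g : M →ₗ[R] N) :
    LinearMap.tensorProduct R A M N (a ⊗ₜ[R] g) = a • g.baseChange A := by
  simp [LinearMap.tensorProduct]

lemma ext_one_tmul {ψ₁ ψ₂ : A ⊗[R] M →ₗ[A] A ⊗[R] N}
    (h : ∀ x : M, ψ₁ ((1 : A) ⊗ₜ x) = ψ₂ ((1 : A) ⊗ₜ x)) : ψ₁ = ψ₂ := by
  apply LinearMap.ext
  intro z
  induction z using TensorProduct.induction_on with
  | zero => simp
  | tmul a x =>
      have : a ⊗ₜ[R] x = a • ((1 : A) ⊗ₜ[R] x) := by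
        rw [TensorProduct.smul_tmul', smul_eq_mul, mul_one]
      rw [this, map_smul, map_smul, h]
  | add x y hx hy => rw [map_add, map_add, hx, hy]

lemma psi_natural (u : P →ₗ[R] M) (t : A ⊗[R] (M →ₗ[R] N)) :
    LinearMap.tensorProduct R A P N (lTensor A (lcomp R N u) t)
      = (LinearMap.tensorProduct R A M N t).comp (u.baseChange A) := by
  induction t using TensorProduct.induction_on with
  | zero => simp
  | tmul a g =>
      rw [lTensor_tmul, psi_tmul, psi_tmul, lcomp_apply', baseChange_comp, smul_comp]
  | add x y hx hy => rw [map_add, map_add, map_add, hx, hy, add_comp]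

variable {n : ℕ}

/-- standard basis vector -/
def e (i : Fin n) : Fin n → R := Pi.single i 1

@[simp] lemma e_apply (i j : Fin n) : e (R := R) i j = if i = j then 1 else 0 := by
  simp [e, Pi.single_apply, eq_comm]

lemma single_sum (v : Fin n → R) : ∑ i, v i • e i = v := by
  funext j
  simp [Finset.sum_apply, e, Pi.single_apply]

/-- `κ i x` is the map `v ↦ v i • x`. -/
def κ (i : Fin n) : N →ₗ[R] (Fin n → R) →ₗ[R] N :=
  LinearMap.smulRightₗ (LinearMap.proj i)

@[simp] lemma κ_apply (i : Fin n) (x : N) (v : Fin n → R) : κ i x v = v i • x := rfl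

lemma sum_κ (g : (Fin n → R) →ₗ[R] N) :
    ∑ i : Fin n, κ (R := R) i (g (e i)) = g := by
  apply LinearMap.ext
  intro v
  have : (∑ i : Fin n, κ (R := R) i (g (e i))) v
      = ∑ i : Fin n, g (v i • e i) := by
    simp only [LinearMap.sum_apply, κ_apply, map_smul]
  rw [this, ← map_sum, single_sum]

lemma reconstruct (s : A ⊗[R] ((Fin n → R) →ₗ[R] N)) :
    ∑ i : Fin n, lTensor A (κ i) (lTensor A (LinearMap.applyₗ (e i)) s) = s := by
  induction s using TensorProduct.induction_on with
  | zero => simp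
  | tmul a g =>
      simp only [lTensor_tmul, applyₗ_apply_apply, ← TensorProduct.tmul_sum]
      rw [sum_κ]
  | add x y hx hy =>
      simp only [map_add, Finset.sum_add_distrib, hx, hy]

lemma eval_psi (s : A ⊗[R] ((Fin n → R) →ₗ[R] N)) (i : Fin n) :
    LinearMap.tensorProduct R A _ N s ((1 : A) ⊗ₜ e i)
      = lTensor A (LinearMap.applyₗ (e i)) s := by
  induction s using TensorProduct.induction_on with
  | zero => simp
  | tmul a g =>
      rw [psi_tmul, LinearMap.smul_apply, baseChange_tmul, lTensor_tmul, applyₗ_apply_apply,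
        TensorProduct.smul_tmul', smul_eq_mul, mul_one]
  | add x y hx hy => simp only [map_add, LinearMap.add_apply, hx, hy]

lemma eval_kappa (i : Fin n) (w : A ⊗[R] N) (v : Fin n → R) :
    LinearMap.tensorProduct R A _ N (lTensor A (κ i) w) ((1 : A) ⊗ₜ v) = v i • w := by
  induction w using TensorProduct.induction_on with
  | zero => simp
  | tmul a x =>
      rw [lTensor_tmul, psi_tmul, LinearMap.smul_apply, baseChange_tmul, κ_apply,
        TensorProduct.tmul_smul, smul_comm a (v i) (((1 : A) ⊗ₜ[R] x)),
        TensorProduct.smul_tmul', smul_eq_mul, mul_one]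
  | add x y hx hy => simp only [map_add, LinearMap.add_apply, hx, hy, smul_add]

lemma psi_injective :
    Function.Injective (LinearMap.tensorProduct R A ((Fin n → R)) N) := by
  rw [injective_iff_map_eq_zero]
  intro s hs
  rw [← reconstruct A s]
  have : ∀ i : Fin n, lTensor A (LinearMap.applyₗ (R := R) (M := Fin n → R) (M₂ := N)
      (e i)) s = 0 := by
    intro i
    rw [← eval_psi, hs]
    simp
  simp [this]

lemma psi_surjective :
    Function.Surjective (LinearMap.tensorProduct R A ((Fin n → R)) N) := by
  intro φ
  refine ⟨∑ i : Fin n, lTensor A (κ i) (φ ((1 : A) ⊗ₜ e i)), ?_⟩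
  apply ext_one_tmul
  intro x
  rw [map_sum, LinearMap.sum_apply]
  have : ∀ i ∈ Finset.univ, (LinearMap.tensorProduct R A (Fin n → R) N)
      (lTensor A (κ i) (φ ((1 : A) ⊗ₜ e i))) ((1 : A) ⊗ₜ x)
      = x i • φ ((1 : A) ⊗ₜ e i) := fun i _ => eval_kappa A i _ x
  rw [Finset.sum_congr rfl this]
  conv_rhs => rw [show x = ∑ i, x i • e i from (single_sum x).symm]
  rw [TensorProduct.tmul_sum, map_sum]
  exact Finset.sum_congr rfl fun i _ => by
    rw [TensorProduct.tmul_smul, map_smul_of_tower]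



variable {R : Type*} [CommRing R] (A : Type*) [CommRing A] [Algebra R A]
variable {M N : Type*} [AddCommGroup M] [Module R M] [AddCommGroup N] [Module R N]

lemma baseChange_surjective {f : M →ₗ[R] N} (hf : Surjective f) :
    Surjective (f.baseChange A) := by
  intro z
  induction z using TensorProduct.induction_on with
  | zero => exact ⟨0, map_zero _⟩
  | tmul a x =>
      obtain ⟨y, rfl⟩ := hf x
      exact ⟨a ⊗ₜ y, rfl⟩
  | add x y hx hy =>
      obtain ⟨u, rfl⟩ := hx
      obtain ⟨v, rfl⟩ := hy
      exact ⟨u + v, map_add _ _ _⟩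

lemma hom_exact {F₀ F₁ : Type*} [AddCommGroup F₀] [Module R F₀]
    [AddCommGroup F₁] [Module R F₁]
    (d : F₁ →ₗ[R] F₀) (p : F₀ →ₗ[R] M) (hp : Surjective p) (hdp : range d = ker p) :
    Function.Exact (lcomp R N p) (lcomp R N d) := by
  intro g
  constructor
  · intro hg
    have hle : ker p ≤ ker g := by
      rw [← hdp]
      rintro _ ⟨x, rfl⟩
      exact mem_ker.mpr (LinearMap.congr_fun hg x)
    refine ⟨((ker p).liftQ g hle).comp (p.quotKerEquivOfSurjective hp).symm.toLinearMap, ?_⟩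
    apply LinearMap.ext
    intro x
    have h1 : (p.quotKerEquivOfSurjective hp).symm (p x) = Submodule.Quotient.mk x := by
      rw [LinearEquiv.symm_apply_eq]
      simp [LinearMap.quotKerEquivOfSurjective]
    simp only [lcomp_apply, LinearMap.comp_apply, LinearEquiv.coe_coe, h1,
      Submodule.liftQ_apply]
  · rintro ⟨g', rfl⟩
    apply LinearMap.ext
    intro x
    have : p (d x) = 0 := by
      rw [← mem_ker, ← hdp]
      exact ⟨x, rfl⟩
    simp [this]

theorem psi_surjective_of_finite [Module.Finite R M] [IsNoetherianRing R] [Module.Flat R A] :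
    Surjective (LinearMap.tensorProduct R A M N) := by
  obtain ⟨n, p, hp⟩ := Module.Finite.exists_fin' R M
  have hfin : Module.Finite R (ker p) := Module.Finite.iff_fg.mpr (IsNoetherian.noetherian _)
  obtain ⟨m, q, hq⟩ := Module.Finite.exists_fin' R (ker p)
  set d : (Fin m → R) →ₗ[R] (Fin n → R) := (ker p).subtype.comp q with hd
  have hdp : range d = ker p := by
    rw [hd, range_comp, range_eq_top.mpr hq, Submodule.map_top, Submodule.range_subtype]
  intro h
  obtain ⟨s, hs⟩ := psi_surjective A (h.comp (p.baseChange A))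
  have hpd : p.comp d = 0 := by
    apply LinearMap.ext
    intro x
    have : d x ∈ ker p := hdp ▸ ⟨x, rfl⟩
    simpa using this
  have h1 : LinearMap.tensorProduct R A (Fin m → R) N (lTensor A (lcomp R N d) s) = 0 := by
    rw [psi_natural, hs, LinearMap.comp_assoc, ← baseChange_comp, hpd]
    have hz : (0 : (Fin m → R) →ₗ[R] M).baseChange A = 0 := by
      apply LinearMap.ext; intro z
      induction z using TensorProduct.induction_on with
      | zero => simp
      | tmul a x => simp
      | add x y hx hy => simp
    rw [hz, comp_zero]
  have h2 : lTensor A (lcomp R N d) s = 0 := by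
    apply psi_injective A
    rw [h1, map_zero]
  obtain ⟨t, ht⟩ := (Module.Flat.lTensor_exact A (hom_exact d p hp hdp) s).mp h2
  refine ⟨t, ?_⟩
  have h4 : (LinearMap.tensorProduct R A M N t).comp (p.baseChange A) = h.comp (p.baseChange A) := by
    rw [← psi_natural, ht, hs]
  apply LinearMap.ext
  intro z
  obtain ⟨w, rfl⟩ := baseChange_surjective A hp z
  exact LinearMap.congr_fun h4 w



variable {R : Type*} [CommRing R]

lemma quot_smul_bot (I : Ideal R) {n : ℕ} (hn : 1 ≤ n) :
    (I ^ n • ⊤ : Submodule R (R ⧸ I)) = ⊥ := by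
  rw [eq_bot_iff, Submodule.smul_le]
  rintro r hr x -
  obtain ⟨y, rfl⟩ := Submodule.Quotient.mk_surjective _ x
  have hrI : r ∈ I := Ideal.pow_le_self (Nat.one_le_iff_ne_zero.mp hn) hr
  rw [Submodule.mem_bot, ← Submodule.Quotient.mk_smul, Submodule.Quotient.mk_eq_zero,
    smul_eq_mul]
  exact Ideal.mul_mem_right y I hrI

lemma of_quot_surjective (I : Ideal R) :
    Surjective (AdicCompletion.of I (R ⧸ I)) := by
  intro z
  obtain ⟨f, rfl⟩ := AdicCompletion.mk_surjective I (R ⧸ I) z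
  refine ⟨f 1, ?_⟩
  ext n
  rw [AdicCompletion.of_apply, AdicCompletion.mk_apply_coe]
  rcases Nat.eq_zero_or_pos n with hn | hn
  · subst hn
    have htop : (I ^ 0 • ⊤ : Submodule R (R ⧸ I)) = ⊤ := by
      rw [pow_zero, Ideal.one_eq_top, Submodule.top_smul]
    have hsub : Subsingleton ((R ⧸ I) ⧸ (I ^ 0 • ⊤ : Submodule R (R ⧸ I))) :=
      Submodule.Quotient.subsingleton_iff.mpr htop
    exact Subsingleton.elim _ _
  · have h := f.property (show 1 ≤ n from hn)
    have h2 : (f 1 : R ⧸ I) - f n ∈ (I ^ 1 • ⊤ : Submodule R (R ⧸ I)) :=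
      SModEq.sub_mem.mp h
    rw [quot_smul_bot I le_rfl, Submodule.mem_bot, sub_eq_zero] at h2
    rw [h2]

variable [IsNoetherianRing R]

lemma exists_algebraMap_sub_mem (I : Ideal R) (a : AdicCompletion I R) :
    ∃ c : R, a - algebraMap R (AdicCompletion I R) c
      ∈ I.map (algebraMap R (AdicCompletion I R)) := by
  obtain ⟨x, hx⟩ := of_quot_surjective I
    (AdicCompletion.ofTensorProduct I (R ⧸ I) (a ⊗ₜ[R] (1 : R ⧸ I)))
  obtain ⟨c, rfl⟩ := Submodule.Quotient.mk_surjective _ x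
  refine ⟨c, ?_⟩
  have h0 : AdicCompletion.ofTensorProduct I (R ⧸ I)
      ((a - algebraMap R (AdicCompletion I R) c) ⊗ₜ[R] (1 : R ⧸ I)) = 0 := by
    rw [TensorProduct.sub_tmul, map_sub, ← hx, AdicCompletion.ofTensorProduct_tmul,
      algebraMap_smul, ← map_smul]
    have : c • (1 : R ⧸ I) = Submodule.Quotient.mk c := by
      rw [show (1 : R ⧸ I) = Submodule.Quotient.mk (1 : R) from rfl,
        ← Submodule.Quotient.mk_smul, smul_eq_mul, mul_one]
    rw [this, sub_self]
  have hinj := (AdicCompletion.ofTensorProduct_bijective_of_finite_of_isNoetherian I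
    (R ⧸ I)).injective
  have h1 : (a - algebraMap R (AdicCompletion I R) c) ⊗ₜ[R] (1 : R ⧸ I) = 0 := by
    apply hinj
    rw [h0, map_zero]
  set x := a - algebraMap R (AdicCompletion I R) c with hxdef
  have h2 : lTensor (AdicCompletion I R) (Submodule.mkQ I) (x ⊗ₜ[R] (1 : R)) = 0 := by
    rw [lTensor_tmul]
    exact h1
  have hexact := lTensor_exact (AdicCompletion I R) (LinearMap.exact_subtype_mkQ I) (Submodule.mkQ_surjective I)
  obtain ⟨y, hy⟩ := (hexact _).mp h2
  have h3 : ∀ y : AdicCompletion I R ⊗[R] I, (TensorProduct.rid R (AdicCompletion I R)).toLinearMap (lTensor (AdicCompletion I R) (Submodule.subtype I) y)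
      ∈ I.map (algebraMap R (AdicCompletion I R)) := by
    intro y
    induction y using TensorProduct.induction_on with
    | zero =>
        rw [map_zero, map_zero]
        exact Ideal.zero_mem _
    | tmul b m =>
        have hbm : (TensorProduct.rid R (AdicCompletion I R)).toLinearMap
            ((lTensor (AdicCompletion I R) (Submodule.subtype I)) (b ⊗ₜ[R] m))
            = (m : R) • b := by simp
        rw [hbm, Algebra.smul_def]
        exact Ideal.mul_mem_right b _ (Ideal.mem_map_of_mem _ m.2)
    | add u v hu hv => rw [map_add, map_add]; exact Ideal.add_mem _ hu hv
  have h4 : (TensorProduct.rid R (AdicCompletion I R)).toLinearMap (x ⊗ₜ[R] (1 : R)) = x := by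
    simp
  rw [← h4, ← hy]
  exact h3 y


variable {R : Type*} [CommRing R] {A : Type*} [CommRing A] [Algebra R A]
variable {M N : Type*} [AddCommGroup M] [Module R M] [AddCommGroup N] [Module R N]

lemma range_psi_smul_le (J : Ideal A) (t : A ⊗[R] (M →ₗ[R] N))
    (htJ : t ∈ J • (⊤ : Submodule A (A ⊗[R] (M →ₗ[R] N)))) :
    ∀ x, LinearMap.tensorProduct R A M N t x ∈ J • (⊤ : Submodule A (A ⊗[R] N)) := by
  refine Submodule.smul_induction_on htJ ?_ ?_
  · intro j hj w _ x
    rw [map_smul, LinearMap.smul_apply]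
    exact Submodule.smul_mem_smul hj trivial
  · intro u v hu hv x
    rw [map_add, LinearMap.add_apply]
    exact Submodule.add_mem _ (hu x) (hv x)

end Stmt11Aux

open Stmt11Aux

set_option maxHeartbeats 1000000 in
/-- Any `R̂`-linear map `M ⊗ R̂ → N ⊗ R̂` between completions of finitely generated
modules agrees, modulo the maximal ideal of `R̂`, with a map extended from `R`. -/
theorem stmt11 (R : Type u) [CommRing R] [IsLocalRing R] [IsNoetherianRing R]
    (M N : Type u) [AddCommGroup M] [Module R M] [Module.Finite R M]
    [AddCommGroup N] [Module R N] [Module.Finite R N]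
    (h : AdicCompletion (IsLocalRing.maximalIdeal R) R ⊗[R] M
        →ₗ[AdicCompletion (IsLocalRing.maximalIdeal R) R]
          AdicCompletion (IsLocalRing.maximalIdeal R) R ⊗[R] N) :
    ∃ f : M →ₗ[R] N,
      LinearMap.range
          (h - LinearMap.baseChange (AdicCompletion (IsLocalRing.maximalIdeal R) R) f) ≤
        (Ideal.map (algebraMap R (AdicCompletion (IsLocalRing.maximalIdeal R) R))
            (IsLocalRing.maximalIdeal R)) •
          (⊤ : Submodule (AdicCompletion (IsLocalRing.maximalIdeal R) R)
            (AdicCompletion (IsLocalRing.maximalIdeal R) R ⊗[R] N)) := by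
  obtain ⟨t, ht⟩ := psi_surjective_of_finite
    (R := R) (A := AdicCompletion (IsLocalRing.maximalIdeal R) R) (M := M) (N := N) h
  obtain ⟨S, hS⟩ := TensorProduct.exists_finset t
  choose c hc using fun a : AdicCompletion (IsLocalRing.maximalIdeal R) R =>
    exists_algebraMap_sub_mem (IsLocalRing.maximalIdeal R) a
  refine ⟨∑ p ∈ S, c p.1 • p.2, ?_⟩
  have hmem : t - (1 : AdicCompletion (IsLocalRing.maximalIdeal R) R)
        ⊗ₜ[R] (∑ p ∈ S, c p.1 • p.2)
      ∈ (Ideal.map (algebraMap R (AdicCompletion (IsLocalRing.maximalIdeal R) R))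
            (IsLocalRing.maximalIdeal R)) •
          (⊤ : Submodule (AdicCompletion (IsLocalRing.maximalIdeal R) R)
            (AdicCompletion (IsLocalRing.maximalIdeal R) R ⊗[R] (M →ₗ[R] N))) := by
    rw [TensorProduct.tmul_sum, hS, ← Finset.sum_sub_distrib]
    refine Submodule.sum_mem _ ?_
    intro p hp
    have h1 : (1 : AdicCompletion (IsLocalRing.maximalIdeal R) R) ⊗ₜ[R] (c p.1 • p.2)
        = (algebraMap R (AdicCompletion (IsLocalRing.maximalIdeal R) R) (c p.1)) ⊗ₜ[R] p.2 := by
      rw [← TensorProduct.smul_tmul, Algebra.algebraMap_eq_smul_one]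
    have h2 : p.1 ⊗ₜ[R] p.2
          - (1 : AdicCompletion (IsLocalRing.maximalIdeal R) R) ⊗ₜ[R] (c p.1 • p.2)
        = (p.1 - algebraMap R (AdicCompletion (IsLocalRing.maximalIdeal R) R) (c p.1))
            • ((1 : AdicCompletion (IsLocalRing.maximalIdeal R) R) ⊗ₜ[R] p.2) := by
      rw [h1, TensorProduct.smul_tmul', smul_eq_mul, mul_one, TensorProduct.sub_tmul]
    rw [h2]
    exact Submodule.smul_mem_smul (hc p.1) trivial
  rintro z ⟨x, rfl⟩
  have hbase : LinearMap.baseChange (AdicCompletion (IsLocalRing.maximalIdeal R) R)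
        (∑ p ∈ S, c p.1 • p.2)
      = LinearMap.tensorProduct R (AdicCompletion (IsLocalRing.maximalIdeal R) R) M N
        ((1 : AdicCompletion (IsLocalRing.maximalIdeal R) R)
          ⊗ₜ[R] (∑ p ∈ S, c p.1 • p.2)) := by
    rw [psi_tmul, one_smul]
  have hsub : h - LinearMap.baseChange (AdicCompletion (IsLocalRing.maximalIdeal R) R)
        (∑ p ∈ S, c p.1 • p.2)
      = LinearMap.tensorProduct R (AdicCompletion (IsLocalRing.maximalIdeal R) R) M N
        (t - (1 : AdicCompletion (IsLocalRing.maximalIdeal R) R)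
          ⊗ₜ[R] (∑ p ∈ S, c p.1 • p.2)) := by
    rw [map_sub, ht, hbase]
  rw [hsub]
  exact range_psi_smul_le _ _ hmem x
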